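/- Let n ≥ 1 and let f : ℝⁿ → ℝ be twice continuously differentiable in a neighborhood of a point x ∈ ℝⁿ. Then as ε → 0⁺, sup_{|σ|=1} [f(x+εσ) + f(x−εσ)]/2 = f(x) + (ε²/2) · sup_{|σ|=1} ⟨D²f(x)σ, σ⟩ + o(ε²), where both suprema are taken over unit vectors σ ∈ ℝⁿ. -/

import Mathlib

open MeasureTheory Metric Set Filter Asymptotics Topology

set_option maxHeartbeats 1000000

variable {E : Type*} [NormedAddCommGroup E] [NormedSpace ℝ E]

/-- Second-order Taylor expansion at a point for a C² function. -/
lemma taylor_order_two {f : E → ℝ} {x : E} (hf : ContDiffAt ℝ 2 f x) :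
    (fun h : E => f (x + h) - f x - fderiv ℝ f x h
        - (1/2) * fderiv ℝ (fderiv ℝ f) x h h) =o[𝓝 (0:E)] (fun h => ‖h‖ ^ 2) := by
  set f' : E → E →L[ℝ] ℝ := fderiv ℝ f with hf'def
  set B : E →L[ℝ] E →L[ℝ] ℝ := fderiv ℝ f' x with hBdef
  have hder : ∀ᶠ y in 𝓝 x, HasFDerivAt f (f' y) y := by
    filter_upwards [hf.eventually (by norm_num)] with y hy
    exact (hy.differentiableAt (by norm_num)).hasFDerivAt
  have hB : HasFDerivAt f' B x := by
    have : ContDiffAt ℝ 1 f' x := hf.fderiv_right (m := 1) (by norm_num)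
    exact (this.differentiableAt (by norm_num)).hasFDerivAt
  have hsymm : ∀ v w, B v w = B w v := second_derivative_symmetric_of_eventually hder hB
  rw [isLittleO_iff]
  intro c hc
  have h1 : ∀ᶠ y in 𝓝 x, HasFDerivAt f (f' y) y ∧ ‖f' y - f' x - B (y - x)‖ ≤ c * ‖y - x‖ :=
    hder.and (isLittleO_iff.1 hB.isLittleO hc)
  obtain ⟨δ, δpos, hδ⟩ := Metric.eventually_nhds_iff.1 h1
  have : ∀ᶠ h : E in 𝓝 0, ‖h‖ < δ := by
    have := Metric.ball_mem_nhds (0:E) δpos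
    filter_upwards [this] with h hh
    simpa [dist_eq_norm] using hh
  filter_upwards [this] with h hh
  set φ : E → ℝ := fun v => f (x + v) - f' x v - (1/2) * B v v with hφdef
  set φ' : E → E →L[ℝ] ℝ := fun v => f' (x + v) - f' x - B v with hφ'def
  have hφderiv : ∀ v, ‖v‖ < δ → HasFDerivAt φ (φ' v) v := by
    intro v hv
    have hxv : dist (x + v) x < δ := by simpa [dist_eq_norm] using hv
    have h1 : HasFDerivAt (fun w => f (x + w)) (f' (x + v)) v := by
      have := ((hδ hxv).1).comp v ((hasFDerivAt_id v).const_add x)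
      simpa [Function.comp_def] using this
    have h2 : HasFDerivAt (fun w => f' x w) (f' x) v := (f' x).hasFDerivAt
    have h3 : HasFDerivAt (fun w : E => (B w) w) ((B v).comp (ContinuousLinearMap.id ℝ E)
        + (ContinuousLinearMap.flip B) v) v :=
      B.hasFDerivAt.clm_apply (hasFDerivAt_id v)
    have h4 := (h1.sub h2).sub ((h3.const_mul (1/2 : ℝ)))
    refine h4.congr_fderiv ?_
    ext k
    simp only [φ', ContinuousLinearMap.sub_apply, ContinuousLinearMap.smul_apply,
      ContinuousLinearMap.add_apply, ContinuousLinearMap.comp_apply,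
      ContinuousLinearMap.coe_id', id_eq, ContinuousLinearMap.flip_apply, smul_eq_mul]
    rw [hsymm k v]
    ring
  have hbound : ∀ v ∈ closedBall (0:E) ‖h‖, ‖φ' v‖ ≤ c * ‖h‖ := by
    intro v hv
    simp only [mem_closedBall, dist_zero_right] at hv
    have hvδ : ‖v‖ < δ := lt_of_le_of_lt hv hh
    have hxv : dist (x + v) x < δ := by simpa [dist_eq_norm] using hvδ
    have := (hδ hxv).2
    simp only [add_sub_cancel_left] at this
    calc ‖φ' v‖ = ‖f' (x + v) - f' x - B v‖ := rfl
      _ ≤ c * ‖v‖ := this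
      _ ≤ c * ‖h‖ := by nlinarith [norm_nonneg v, norm_nonneg h]
  have hMVT := Convex.norm_image_sub_le_of_norm_hasFDerivWithin_le
    (f := φ) (f' := φ') (C := c * ‖h‖) (s := closedBall (0:E) ‖h‖)
    (fun v hv => (hφderiv v (lt_of_le_of_lt (by simpa [dist_eq_norm] using hv) hh)).hasFDerivWithinAt)
    hbound (convex_closedBall _ _) (mem_closedBall_self (norm_nonneg h))
    (mem_closedBall_zero_iff.2 le_rfl)
  have hφ0 : φ 0 = f x := by simp [φ]
  have : ‖φ h - φ 0‖ ≤ c * ‖h‖ * ‖h‖ := by simpa using hMVT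
  rw [hφ0] at this
  have heq : f (x + h) - f x - f' x h - (1/2) * B h h = φ h - f x := by simp [φ]; ring
  rw [heq]
  calc ‖φ h - f x‖ ≤ c * ‖h‖ * ‖h‖ := this
    _ = c * ‖‖h‖ ^ 2‖ := by rw [Real.norm_of_nonneg (by positivity)]; ring

/-- Symmetric second-order expansion: the first-order terms cancel. -/
lemma taylor_symm {f : E → ℝ} {x : E} (hf : ContDiffAt ℝ 2 f x) :
    (fun h : E => f (x + h) + f (x - h) - 2 * f x
        - fderiv ℝ (fderiv ℝ f) x h h) =o[𝓝 (0:E)] (fun h => ‖h‖ ^ 2) := by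
  have h1 := taylor_order_two hf
  have hneg : Filter.Tendsto (fun h : E => -h) (𝓝 0) (𝓝 0) := by
    simpa using (continuous_neg.tendsto (0 : E))
  have h2 := h1.comp_tendsto hneg
  have h2' : (fun h : E => f (x + -h) - f x - fderiv ℝ f x (-h)
      - (1/2) * fderiv ℝ (fderiv ℝ f) x (-h) (-h)) =o[𝓝 (0:E)] (fun h => ‖h‖ ^ 2) := by
    exact h2.congr (fun h => rfl) (fun h => by simp)
  have h3 := h1.add h2'
  have heq : (fun h : E => f (x + h) + f (x - h) - 2 * f x - fderiv ℝ (fderiv ℝ f) x h h)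
      = fun h : E => (f (x + h) - f x - fderiv ℝ f x h
          - (1/2) * fderiv ℝ (fderiv ℝ f) x h h)
        + (f (x + -h) - f x - fderiv ℝ f x (-h)
          - (1/2) * fderiv ℝ (fderiv ℝ f) x (-h) (-h)) := by
    funext h
    simp only [sub_eq_add_neg, map_neg, ContinuousLinearMap.neg_apply, neg_neg]
    ring
  rw [heq]
  exact h3

lemma abs_ciSup_sub_ciSup_le {ι : Type*} [Nonempty ι] {a b : ι → ℝ} {c : ℝ}
    (ha : BddAbove (Set.range a)) (hb : BddAbove (Set.range b))
    (hab : ∀ i, |a i - b i| ≤ c) : |(⨆ i, a i) - ⨆ i, b i| ≤ c := by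
  rw [abs_sub_le_iff]
  constructor
  · rw [sub_le_iff_le_add]
    refine ciSup_le fun i => ?_
    have h1 := (abs_sub_le_iff.1 (hab i)).1
    have h2 := le_ciSup hb i
    linarith
  · rw [sub_le_iff_le_add]
    refine ciSup_le fun i => ?_
    have h1 := (abs_sub_le_iff.1 (hab i)).2
    have h2 := le_ciSup ha i
    linarith
open MeasureTheory

/-- For `f` twice continuously differentiable near `x`, as `ε → 0⁺`,
`sup_{|σ|=1} (f(x+εσ)+f(x−εσ))/2 = f(x) + ε²/2 · sup_{|σ|=1} ⟨D²f(x)σ,σ⟩ + o(ε²)`. -/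
theorem sup_symmetric_difference_expansion
    (n : ℕ) (hn : 1 ≤ n) (f : EuclideanSpace ℝ (Fin n) → ℝ)
    (x : EuclideanSpace ℝ (Fin n))
    (U : Set (EuclideanSpace ℝ (Fin n))) (hU : U ∈ nhds x) (hf : ContDiffOn ℝ 2 f U) :
    (fun ε : ℝ =>
      (⨆ σ : sphere (0 : EuclideanSpace ℝ (Fin n)) 1,
        (f (x + ε • (σ : EuclideanSpace ℝ (Fin n))) +
         f (x - ε • (σ : EuclideanSpace ℝ (Fin n)))) / 2) -
      (f x + ε ^ 2 / 2 *
        ⨆ σ : sphere (0 : EuclideanSpace ℝ (Fin n)) 1,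
          fderiv ℝ (fderiv ℝ f) x
            (σ : EuclideanSpace ℝ (Fin n)) (σ : EuclideanSpace ℝ (Fin n))))
      =o[𝓝[>] (0 : ℝ)] (fun ε => ε ^ 2) := by
  haveI hne : Nonempty (sphere (0 : EuclideanSpace ℝ (Fin n)) 1) :=
    ⟨⟨EuclideanSpace.single ⟨0, hn⟩ (1:ℝ), by
      simp [mem_sphere_zero_iff_norm]⟩⟩
  set B := fderiv ℝ (fderiv ℝ f) x with hBdef
  have hfa : ContDiffAt ℝ 2 f x := hf.contDiffAt hU
  have hG := taylor_symm hfa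
  have hBbdd : BddAbove (Set.range fun σ : sphere (0 : EuclideanSpace ℝ (Fin n)) 1 =>
      B (σ : EuclideanSpace ℝ (Fin n)) (σ : EuclideanSpace ℝ (Fin n))) := by
    refine ⟨‖B‖, ?_⟩
    rintro y ⟨σ, rfl⟩
    have hσ : ‖(σ : EuclideanSpace ℝ (Fin n))‖ = 1 := mem_sphere_zero_iff_norm.1 σ.2
    calc B σ σ ≤ ‖B (σ : EuclideanSpace ℝ (Fin n)) (σ : EuclideanSpace ℝ (Fin n))‖ :=
          le_abs_self _
      _ ≤ ‖B (σ : EuclideanSpace ℝ (Fin n))‖ * ‖(σ : EuclideanSpace ℝ (Fin n))‖ :=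
          (B _).le_opNorm _
      _ ≤ ‖B‖ * ‖(σ : EuclideanSpace ℝ (Fin n))‖ * ‖(σ : EuclideanSpace ℝ (Fin n))‖ := by
          have := B.le_opNorm (σ : EuclideanSpace ℝ (Fin n))
          nlinarith [norm_nonneg (σ : EuclideanSpace ℝ (Fin n))]
      _ = ‖B‖ := by rw [hσ]; ring
  obtain ⟨V, hVU, hVopen, hxV⟩ := _root_.mem_nhds_iff.mp hU
  have fCont : ContinuousOn f V := (hf.mono hVU).continuousOn
  obtain ⟨δ₀, hδ₀pos, hball⟩ := Metric.isOpen_iff.mp hVopen x hxV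
  rw [isLittleO_iff]
  intro c hc
  obtain ⟨δ₁, hδ₁pos, hδ₁⟩ := Metric.eventually_nhds_iff.1 (isLittleO_iff.1 hG hc)
  have hev : Ioo (0:ℝ) (min δ₀ δ₁) ∈ 𝓝[>] (0:ℝ) :=
    Ioo_mem_nhdsGT_of_mem ⟨le_refl 0, lt_min hδ₀pos hδ₁pos⟩
  filter_upwards [hev] with ε hε
  obtain ⟨hε0, hεδ⟩ := hε
  have hεδ0 : ε < δ₀ := lt_of_lt_of_le hεδ (min_le_left _ _)
  have hεδ1 : ε < δ₁ := lt_of_lt_of_le hεδ (min_le_right _ _)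
  set a : sphere (0 : EuclideanSpace ℝ (Fin n)) 1 → ℝ := fun σ =>
    (f (x + ε • (σ : EuclideanSpace ℝ (Fin n))) + f (x - ε • (σ : EuclideanSpace ℝ (Fin n)))) / 2
    with hadef
  set b : sphere (0 : EuclideanSpace ℝ (Fin n)) 1 → ℝ := fun σ =>
    f x + ε ^ 2 / 2 * B (σ : EuclideanSpace ℝ (Fin n)) (σ : EuclideanSpace ℝ (Fin n)) with hbdef
  have hnorm : ∀ σ : sphere (0 : EuclideanSpace ℝ (Fin n)) 1,
      ‖ε • (σ : EuclideanSpace ℝ (Fin n))‖ = ε := fun σ => by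
    rw [norm_smul, mem_sphere_zero_iff_norm.1 σ.2, Real.norm_eq_abs, abs_of_pos hε0, mul_one]
  have hmem : ∀ σ : sphere (0 : EuclideanSpace ℝ (Fin n)) 1,
      x + ε • (σ : EuclideanSpace ℝ (Fin n)) ∈ V ∧
      x - ε • (σ : EuclideanSpace ℝ (Fin n)) ∈ V := by
    intro σ
    constructor <;> apply hball <;> rw [mem_ball, dist_eq_norm] <;>
      simp only [add_sub_cancel_left, sub_sub_cancel_left, norm_neg] <;>
      rw [hnorm σ] <;> exact hεδ0
  have habdd : BddAbove (Set.range a) := by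
    have hconts : ContinuousOn (fun σ : EuclideanSpace ℝ (Fin n) =>
        (f (x + ε • σ) + f (x - ε • σ)) / 2) (sphere (0 : EuclideanSpace ℝ (Fin n)) 1) := by
      apply ContinuousOn.div_const
      apply ContinuousOn.add
      · exact fCont.comp ((continuous_const.add (continuous_id.const_smul ε)).continuousOn)
          (fun σ hσ => (hmem ⟨σ, hσ⟩).1)
      · exact fCont.comp ((continuous_const.sub (continuous_id.const_smul ε)).continuousOn)
          (fun σ hσ => (hmem ⟨σ, hσ⟩).2)
    have himg := (isCompact_sphere (0 : EuclideanSpace ℝ (Fin n)) 1).bddAbove_image hconts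
    have : Set.range a = (fun σ : EuclideanSpace ℝ (Fin n) =>
        (f (x + ε • σ) + f (x - ε • σ)) / 2) '' sphere (0 : EuclideanSpace ℝ (Fin n)) 1 := by
      ext y
      constructor
      · rintro ⟨σ, rfl⟩; exact ⟨σ, σ.2, rfl⟩
      · rintro ⟨v, hv, rfl⟩; exact ⟨⟨v, hv⟩, rfl⟩
    rw [this]; exact himg
  have hbbdd : BddAbove (Set.range fun σ : sphere (0 : EuclideanSpace ℝ (Fin n)) 1 =>
      ε ^ 2 / 2 * B (σ : EuclideanSpace ℝ (Fin n)) (σ : EuclideanSpace ℝ (Fin n))) := by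
    obtain ⟨M, hM⟩ := hBbdd
    refine ⟨ε ^ 2 / 2 * M, ?_⟩
    rintro y ⟨σ, rfl⟩
    have := hM ⟨σ, rfl⟩
    have h2 : (0:ℝ) ≤ ε ^ 2 / 2 := by positivity
    exact mul_le_mul_of_nonneg_left this h2
  have hbbdd' : BddAbove (Set.range b) := by
    obtain ⟨M, hM⟩ := hbbdd
    refine ⟨f x + M, ?_⟩
    rintro y ⟨σ, rfl⟩
    have := hM ⟨σ, rfl⟩
    simp only [hbdef]
    linarith
  have hsupb : (⨆ σ, b σ) = f x + ε ^ 2 / 2 *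
      ⨆ σ : sphere (0 : EuclideanSpace ℝ (Fin n)) 1,
        B (σ : EuclideanSpace ℝ (Fin n)) (σ : EuclideanSpace ℝ (Fin n)) := by
    rw [Real.mul_iSup_of_nonneg (by positivity)]
    exact (Monotone.map_ciSup_of_continuousAt
      (f := fun y : ℝ => f x + y) (continuous_add_left (f x)).continuousAt
      (fun u v huv => by simpa using huv) hbbdd).symm
  have hab : ∀ σ, |a σ - b σ| ≤ c * ε ^ 2 := by
    intro σ
    have hd : dist (ε • (σ : EuclideanSpace ℝ (Fin n))) 0 < δ₁ := by
      rw [dist_zero_right, hnorm σ]; exact hεδ1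
    have hkey := hδ₁ hd
    rw [hnorm σ] at hkey
    have hB2 : B (ε • (σ : EuclideanSpace ℝ (Fin n))) (ε • (σ : EuclideanSpace ℝ (Fin n)))
        = ε ^ 2 * B (σ : EuclideanSpace ℝ (Fin n)) (σ : EuclideanSpace ℝ (Fin n)) := by
      rw [B.map_smul]
      simp only [ContinuousLinearMap.smul_apply, ContinuousLinearMap.map_smul, smul_eq_mul]
      ring
    have hdiff : a σ - b σ = (f (x + ε • (σ : EuclideanSpace ℝ (Fin n)))
        + f (x - ε • (σ : EuclideanSpace ℝ (Fin n))) - 2 * f x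
        - B (ε • (σ : EuclideanSpace ℝ (Fin n))) (ε • (σ : EuclideanSpace ℝ (Fin n)))) / 2 := by
      rw [hB2]; simp only [hadef, hbdef]; ring
    rw [hdiff]
    rw [Real.norm_eq_abs] at hkey
    have hε2 : ‖ε ^ 2‖ = ε ^ 2 := by
      rw [Real.norm_eq_abs, abs_of_pos (by positivity)]
    rw [hε2] at hkey
    rw [abs_div]
    have h2 : |(2:ℝ)| = 2 := by norm_num
    rw [h2]
    rw [← hBdef] at hkey
    have hcε : (0:ℝ) ≤ c * ε ^ 2 := by positivity
    linarith
  have final := abs_ciSup_sub_ciSup_le habdd hbbdd' hab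
  rw [hsupb] at final
  rw [Real.norm_eq_abs, Real.norm_eq_abs, abs_of_pos (show (0:ℝ) < ε ^ 2 by positivity)]
  exact final
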